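/- (Zmud–Kurennoi) Let G be a finite group and let H be a finite subgroup of V(ℤG). Then the order of H divides the order of G. -/

import Mathlib

open MonoidAlgebra

/-- The augmentation map of a group ring: the sum of the coefficients. -/
noncomputable def aug (R : Type*) [CommRing R] (G : Type*) [Group G] :
    MonoidAlgebra R G →+* R :=
  MonoidAlgebra.liftNCRingHom (RingHom.id R) 1 (fun _ _ => Commute.one_right _)

/-- The coefficient-wise ring homomorphism between group rings induced by a
ring homomorphism of the coefficient rings. -/
noncomputable def mapCoeff {R S : Type*} [CommRing R] [CommRing S] (G : Type*) [Group G]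
    (f : R →+* S) : MonoidAlgebra R G →+* MonoidAlgebra S G :=
  MonoidAlgebra.liftNCRingHom (MonoidAlgebra.singleOneRingHom.comp f) (MonoidAlgebra.of S G)
    (fun r g => by
      simp [Commute, SemiconjBy, MonoidAlgebra.singleOneRingHom,
        MonoidAlgebra.single_mul_single])

open scoped Classical in
/-- The partial augmentation at `g`: the sum of the coefficients at the
conjugacy class of `g`. -/
noncomputable def partialAug {G : Type*} [Group G] [Fintype G] (g : G)
    (a : MonoidAlgebra ℤ G) : ℤ :=
  ∑ x ∈ Finset.univ.filter (fun x => IsConj g x), a.coeff x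


lemma aug_single {R : Type*} [CommRing R] {G : Type*} [Group G] (g : G) (r : R) :
    aug R G (MonoidAlgebra.single g r) = r := by
  simp [aug, MonoidAlgebra.liftNCRingHom, MonoidAlgebra.liftNC_single]

lemma mapCoeff_single {R S : Type*} [CommRing R] [CommRing S] {G : Type*} [Group G]
    (f : R →+* S) (g : G) (r : R) :
    mapCoeff G f (MonoidAlgebra.single g r) = MonoidAlgebra.single g (f r) := by
  simp [mapCoeff, MonoidAlgebra.liftNCRingHom, MonoidAlgebra.liftNC_single,
    MonoidAlgebra.singleOneRingHom, MonoidAlgebra.of_apply,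
    MonoidAlgebra.single_mul_single]

lemma mapCoeff_apply {R S : Type*} [CommRing R] [CommRing S] {G : Type*} [Group G]
    (f : R →+* S) (a : MonoidAlgebra R G) (g : G) :
    (mapCoeff G f a).coeff g = f (a.coeff g) := by
  classical
  induction a using MonoidAlgebra.induction_linear with
  | zero => simp
  | add x y hx hy => rw [map_add, MonoidAlgebra.coeff_add, MonoidAlgebra.coeff_add,
      Finsupp.add_apply, Finsupp.add_apply, hx, hy, map_add]
  | single g' r =>
      rw [mapCoeff_single]
      simp only [MonoidAlgebra.coeff_single, Finsupp.single_apply]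
      split <;> simp

section Helpers
set_option linter.unusedSectionVars false
open Polynomial

variable {G : Type*} [Group G] [Fintype G] [DecidableEq G]

noncomputable def cbasis (G : Type*) [Group G] [Fintype G] :
    Module.Basis G ℂ (MonoidAlgebra ℂ G) := MonoidAlgebra.basis G ℂ

@[simp] lemma cbasis_apply (g : G) :
    cbasis G g = MonoidAlgebra.single g 1 := rfl

@[simp] lemma cbasis_repr (a : MonoidAlgebra ℂ G) (g : G) :
    (cbasis G).repr a g = a.coeff g := rfl

noncomputable def lmat (G : Type*) [Group G] [Fintype G] [DecidableEq G] :
    MonoidAlgebra ℂ G →ₐ[ℂ] Matrix G G ℂ :=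
  (LinearMap.toMatrixAlgEquiv (cbasis G)).toAlgHom.comp (Algebra.lmul ℂ (MonoidAlgebra ℂ G))

lemma lmat_apply (a : MonoidAlgebra ℂ G) (i j : G) :
    lmat G a i j = a.coeff (i * j⁻¹) := by
  simp [lmat, LinearMap.toMatrixAlgEquiv, LinearMap.toMatrix_apply,
    MonoidAlgebra.coeff_mul_single_apply]

lemma lmat_trace (a : MonoidAlgebra ℂ G) :
    (lmat G a).trace = (Fintype.card G : ℂ) * a.coeff 1 := by
  simp [Matrix.trace, Matrix.diag, lmat_apply, Finset.sum_const, mul_comm]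

lemma lmat_injective : Function.Injective (lmat G) := by
  intro x y h
  have := congrArg (fun M => ((LinearMap.toMatrixAlgEquiv (cbasis G)).symm M) 1) h
  simpa [lmat] using this

end Helpers

section Helpers2

lemma re_eq_one_of_abs_one {z : ℂ} (h1 : ‖z‖ = 1) (h2 : 1 ≤ z.re) : z = 1 := by
  have hsq : z.re ^ 2 + z.im ^ 2 = 1 := by
    have := Complex.sq_norm z
    rw [h1] at this
    simpa [Complex.normSq_apply, sq] using this.symm
  have hre : z.re ≤ 1 := by nlinarith [sq_nonneg z.im]
  have hre1 : z.re = 1 := le_antisymm hre h2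
  have him : z.im = 0 := by nlinarith
  exact Complex.ext (by simp [hre1]) (by simp [him])

lemma multiset_all_eq_of_abs_sum (s : Multiset ℂ) (h1 : ∀ z ∈ s, ‖z‖ = 1)
    (h2 : ‖s.sum‖ = s.card) : ∀ z ∈ s, (s.card : ℂ) * z = s.sum := by
  intro z hz
  obtain ⟨t, rfl⟩ := Multiset.exists_cons_of_mem hz
  set T : ℂ := (z ::ₘ t).sum with hT
  have hcard : ((z ::ₘ t).card : ℝ) = t.card + 1 := by simp
  have hcpos : (0:ℝ) < ((z ::ₘ t).card : ℝ) := by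
    rw [hcard]; positivity
  have hTne : T ≠ 0 := by
    intro h; rw [h] at h2; simp only [norm_zero] at h2
    exact absurd h2.symm (ne_of_gt hcpos)
  set c : ℂ := ((z ::ₘ t).card : ℂ) / T with hc
  have habsc : ‖c‖ = 1 := by
    rw [hc, norm_div, h2, Complex.norm_natCast]
    rw [div_self (by exact_mod_cast ne_of_gt hcpos)]
  have hcT : c * T = ((z ::ₘ t).card : ℂ) := by
    rw [hc]; field_simp
  have hsplit : c * T = c * z + c * t.sum := by
    rw [hT, Multiset.sum_cons, mul_add]
  have htbound : (c * t.sum).re ≤ t.card := by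
    calc (c * t.sum).re ≤ ‖c * t.sum‖ := Complex.re_le_norm _
      _ = ‖t.sum‖ := by rw [norm_mul, habsc, one_mul]
      _ ≤ (t.map (‖·‖)).sum := by
          simpa using norm_multiset_sum_le t
      _ = t.card := by
          rw [Multiset.map_congr rfl (fun x hx => h1 x (Multiset.mem_cons_of_mem hx))]
          simp [Multiset.map_const']
  have hzbound : (c * z).re ≤ 1 := by
    calc (c * z).re ≤ ‖c * z‖ := Complex.re_le_norm _
      _ = 1 := by rw [norm_mul, habsc, h1 z hz, one_mul]
  have hre : (c * z).re + (c * t.sum).re = t.card + 1 := by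
    have := congrArg Complex.re (hcT.symm.trans hsplit)
    simpa [Complex.add_re] using this.symm.trans (by simp)
  have h1z : 1 ≤ (c * z).re := by linarith
  have : c * z = 1 := re_eq_one_of_abs_one (by rw [norm_mul, habsc, h1 z hz, one_mul]) h1z
  have hcne : c ≠ 0 := by
    intro h; rw [h] at habsc; simp at habsc
  calc ((z ::ₘ t).card : ℂ) * z = c * T * z := by rw [hcT]
    _ = T * (c * z) := by ring
    _ = T := by rw [this, mul_one]

end Helpers2

section Helpers3
open Polynomial
set_option linter.unusedSectionVars false

variable {n : Type*} [Fintype n] [DecidableEq n]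

lemma charpoly_root_pow_eq_one {M : Matrix n n ℂ} {k : ℕ}
    (hM : M ^ k = 1) {z : ℂ} (hz : z ∈ M.charpoly.roots) : z ^ k = 1 := by
  have hroot : M.charpoly.IsRoot z := isRoot_of_mem_roots hz
  have hdet : (z • (1 : Matrix n n ℂ) - M).det = 0 := by
    have h1 : Polynomial.eval z M.charpoly = 0 := hroot
    rw [Matrix.charpoly, eval_det, Matrix.matPolyEquiv_charmatrix] at h1
    rw [← h1]
    congr 1
    rw [eval_sub, eval_X, eval_C]
    congr 1
    ext i j
    simp [Matrix.smul_apply, Matrix.one_apply, Matrix.diagonal_apply, mul_ite]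
  obtain ⟨v, hv0, hv⟩ := Matrix.exists_mulVec_eq_zero_iff.mpr hdet
  have hMv : M.mulVec v = z • v := by
    rw [Matrix.sub_mulVec, Matrix.smul_mulVec, Matrix.one_mulVec, sub_eq_zero] at hv
    exact hv.symm
  have hpow : ∀ j : ℕ, (M ^ j).mulVec v = z ^ j • v := by
    intro j
    induction j with
    | zero => simp [Matrix.one_mulVec]
    | succ j ih =>
        rw [pow_succ, ← Matrix.mulVec_mulVec, hMv, Matrix.mulVec_smul, ih, pow_succ, mul_comm,
          mul_smul]
  have := hpow k
  rw [hM, Matrix.one_mulVec] at this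
  obtain ⟨i, hi⟩ := Function.ne_iff.mp hv0
  have : v i = z ^ k * v i := by
    conv_lhs => rw [this]
    simp
  have h2 : (z ^ k - 1) * v i = 0 := by
    rw [sub_mul, one_mul, ← this, sub_self]
  rcases mul_eq_zero.mp h2 with h | h
  · exact sub_eq_zero.mp h
  · exact absurd h hi

lemma matrix_eq_scalar_of_pow_eq_one [Nonempty n] {M : Matrix n n ℂ} {k : ℕ} (hk : k ≠ 0)
    (hM : M ^ k = 1) {ζ : ℂ} (hζ : ∀ z ∈ M.charpoly.roots, z = ζ) :
    M = algebraMap ℂ (Matrix n n ℂ) ζ := by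
  have hint : IsIntegral ℂ M := IsIntegral.of_finite ℂ M
  set p := minpoly ℂ M with hp
  have hdvd1 : p ∣ X ^ k - C 1 := by
    apply minpoly.dvd
    simp [map_pow, hM]
  have hsep : p.Separable :=
    (separable_X_pow_sub_C (1 : ℂ) (by exact_mod_cast hk) one_ne_zero).of_dvd hdvd1
  have hnodup : p.roots.Nodup := nodup_roots hsep
  have hsub : p.roots ⊆ M.charpoly.roots :=
    Multiset.Le.subset (roots.le_of_dvd (M.charpoly_monic).ne_zero (M.minpoly_dvd_charpoly))
  have hsplits : p.Splits := IsAlgClosed.splits p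
  have hcard : p.roots.card = p.natDegree := (splits_iff_card_roots).mp hsplits
  have hdeg : 0 < p.natDegree := minpoly.natDegree_pos hint
  have hallζ : ∀ z ∈ p.roots, z = ζ := fun z hz => hζ z (hsub hz)
  have hrep : p.roots = Multiset.replicate p.roots.card ζ :=
    Multiset.eq_replicate_card.mpr hallζ
  have hle : p.roots.card ≤ 1 := by
    by_contra hgt
    push_neg at hgt
    rw [hrep] at hnodup
    have h2 : (2 : ℕ) ≤ p.roots.card := hgt
    have : ¬ (Multiset.replicate p.roots.card ζ).Nodup := by
      rw [show p.roots.card = (p.roots.card - 2) + 1 + 1 by omega]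
      simp [Multiset.replicate_succ, Multiset.nodup_cons, Multiset.mem_replicate]
    exact this hnodup
  have hcard1 : p.roots.card = 1 := by omega
  have hroots : p.roots = {ζ} := by
    rw [hrep, hcard1]
    rfl
  have hpeq : p = X - C ζ := by
    have := hsplits.eq_prod_roots_of_monic (minpoly.monic hint)
    rw [hroots] at this
    simpa using this
  have haev : aeval M p = 0 := minpoly.aeval ℂ M
  rw [hpeq] at haev
  simp only [map_sub, aeval_X, aeval_C] at haev
  exact sub_eq_zero.mp haev

end Helpers3
section BH
open Polynomial

lemma algebraMap_monoidAlgebra {G : Type*} [Group G] (c : ℂ) :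
    algebraMap ℂ (MonoidAlgebra ℂ G) c = MonoidAlgebra.single 1 c := by
  rw [Algebra.algebraMap_eq_smul_one, MonoidAlgebra.one_def, MonoidAlgebra.smul_single, smul_eq_mul,
    mul_one]

lemma berman_higman {G : Type*} [Group G] [Fintype G] [DecidableEq G]
    (u : (MonoidAlgebra ℤ G)ˣ) {k : ℕ} (hk : k ≠ 0) (huk : u ^ k = 1)
    (haug : aug ℤ G (u : MonoidAlgebra ℤ G) = 1) (hu : u ≠ 1) :
    (u : MonoidAlgebra ℤ G).coeff 1 = 0 := by
  by_contra ht0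
  set n := Fintype.card G with hndef
  have hn : 0 < n := Fintype.card_pos
  set v : MonoidAlgebra ℂ G := mapCoeff G (Int.castRingHom ℂ) (u : MonoidAlgebra ℤ G) with hvdef
  set A : Matrix G G ℂ := lmat G v with hAdef
  have hvk : v ^ k = 1 := by
    rw [hvdef, ← map_pow, ← Units.val_pow_eq_pow_val, huk, Units.val_one, map_one]
  have hAk : A ^ k = 1 := by rw [hAdef, ← map_pow, hvk, map_one]
  set t : ℤ := (u : MonoidAlgebra ℤ G).coeff 1 with htdef
  have hv1 : v.coeff 1 = (t : ℂ) := mapCoeff_apply _ _ _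
  have htr : A.trace = (n : ℂ) * (t : ℂ) := by rw [hAdef, lmat_trace, hv1]
  have hsum : A.trace = A.charpoly.roots.sum := Matrix.trace_eq_sum_roots_charpoly A
  have habs1 : ∀ z ∈ A.charpoly.roots, ‖z‖ = 1 := by
    intro z hz
    have h1 := charpoly_root_pow_eq_one hAk hz
    have habs : ‖z‖ ^ k = 1 := by rw [← norm_pow, h1, norm_one]
    rcases (pow_eq_one_iff_cases).mp habs with h | h | h
    · exact absurd h hk
    · exact h
    · exfalso
      have := norm_nonneg z
      rw [h.1] at this
      linarith
  have hcard : A.charpoly.roots.card = n := by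
    rw [(splits_iff_card_roots).mp (IsAlgClosed.splits A.charpoly),
      Matrix.charpoly_natDegree_eq_dim]
  have hmapabs : (A.charpoly.roots.map (‖·‖)).sum = (n : ℝ) := by
    rw [Multiset.map_congr rfl (fun z hz => habs1 z hz)]
    simp [Multiset.map_const', hcard]
  have hble : ‖A.trace‖ ≤ (n : ℝ) := by
    rw [hsum, ← hmapabs]
    simpa using norm_multiset_sum_le A.charpoly.roots
  have habst : ‖A.trace‖ = (n : ℝ) * |(t : ℝ)| := by
    rw [htr, norm_mul, Complex.norm_natCast]
    congr 1
    rw [show ((t : ℤ) : ℂ) = ((t : ℝ) : ℂ) by push_cast; ring, Complex.norm_real, Real.norm_eq_abs]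
  have htabs : |(t : ℝ)| ≤ 1 := by
    rw [habst] at hble
    have hnR : (0 : ℝ) < n := by exact_mod_cast hn
    nlinarith
  have ht1 : t = 1 ∨ t = -1 := by
    have h : |t| ≤ 1 := by exact_mod_cast (by rwa [← Int.cast_abs] at htabs : ((|t| : ℤ) : ℝ) ≤ 1)
    rw [abs_le] at h
    omega
  have htabs1 : |(t : ℝ)| = 1 := by
    rcases ht1 with h | h <;> rw [h] <;> norm_num
  have habseq : ‖A.charpoly.roots.sum‖ = ((A.charpoly.roots.card : ℕ) : ℝ) := by
    rw [← hsum, habst, htabs1, mul_one, hcard]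
  have hall := multiset_all_eq_of_abs_sum A.charpoly.roots habs1 habseq
  have hζ : ∀ z ∈ A.charpoly.roots, z = (t : ℂ) := by
    intro z hz
    have h2 := hall z hz
    rw [hcard, ← hsum, htr] at h2
    have hnC : ((n : ℕ) : ℂ) ≠ 0 := by exact_mod_cast hn.ne'
    exact mul_left_cancel₀ hnC h2
  haveI : Nonempty G := Fintype.card_pos_iff.mp hn
  have hA : A = algebraMap ℂ (Matrix G G ℂ) (t : ℂ) := matrix_eq_scalar_of_pow_eq_one hk hAk hζ
  have hvA : v = algebraMap ℂ (MonoidAlgebra ℂ G) (t : ℂ) := by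
    apply lmat_injective
    rw [← hAdef, hA, AlgHom.commutes]
  have hcoeff : ∀ g : G, ((u : MonoidAlgebra ℤ G).coeff g : ℂ) =
      (MonoidAlgebra.single (1 : G) ((t : ℤ) : ℂ)).coeff g := by
    intro g
    have h4 : (mapCoeff G (Int.castRingHom ℂ) (u : MonoidAlgebra ℤ G)).coeff g =
        (MonoidAlgebra.single (1 : G) ((t : ℤ) : ℂ)).coeff g := by
      rw [← hvdef, hvA, algebraMap_monoidAlgebra]
    rw [mapCoeff_apply] at h4
    simpa using h4
  have hueq : (u : MonoidAlgebra ℤ G) = MonoidAlgebra.single 1 t := by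
    ext g
    have h3 := hcoeff g
    rw [MonoidAlgebra.coeff_single, Finsupp.single_apply] at h3 ⊢
    split at h3 <;> rename_i hcase
    · simp only [if_pos hcase]
      exact_mod_cast h3
    · simp only [if_neg hcase]
      exact_mod_cast h3
  rw [hueq, aug_single] at haug
  apply hu
  ext
  rw [hueq, haug, ← MonoidAlgebra.one_def, Units.val_one]
end BH

section TraceLmul
variable {G : Type*} [Group G] [Fintype G] [DecidableEq G]

lemma trace_lmul (a : MonoidAlgebra ℂ G) :
    LinearMap.trace ℂ (MonoidAlgebra ℂ G) (Algebra.lmul ℂ (MonoidAlgebra ℂ G) a) =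
      (Fintype.card G : ℂ) * a.coeff 1 := by
  rw [LinearMap.trace_eq_matrix_trace ℂ (cbasis G),
    show LinearMap.toMatrix (cbasis G) (cbasis G) (Algebra.lmul ℂ (MonoidAlgebra ℂ G) a) =
      lmat G a from rfl, lmat_trace]

end TraceLmul

theorem zmud_kurennoi (G : Type*) [Group G] [Fintype G]
    (H : Subgroup (MonoidAlgebra ℤ G)ˣ) [Finite H]
    (hH : ∀ h ∈ H, aug ℤ G (h : MonoidAlgebra ℤ G) = 1) :
    Nat.card H ∣ Nat.card G := by
  classical
  haveI : Fintype H := Fintype.ofFinite H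
  set m := Nat.card H with hm
  have hmpos : 0 < m := Nat.card_pos
  have hmfin : m = Fintype.card H := Nat.card_eq_fintype_card
  set n := Fintype.card G with hn
  have hnpos : 0 < n := Fintype.card_pos
  have hpow : ∀ h : H, ((h : (MonoidAlgebra ℤ G)ˣ)) ^ m = 1 := by
    intro h
    have h1 : h ^ m = 1 := by rw [hmfin]; exact pow_card_eq_one
    have := congrArg (fun x : H => (x : (MonoidAlgebra ℤ G)ˣ)) h1
    simpa using this
  set φ := mapCoeff G (Int.castRingHom ℂ) with hφ
  set L : H → Module.End ℂ (MonoidAlgebra ℂ G) :=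
    fun h => Algebra.lmul ℂ (MonoidAlgebra ℂ G)
      (φ ((h : (MonoidAlgebra ℤ G)ˣ) : MonoidAlgebra ℤ G)) with hL
  have hLmul : ∀ h h' : H, L h * L h' = L (h * h') := by
    intro h h'
    simp only [hL, ← map_mul]
    rfl
  set S : Module.End ℂ (MonoidAlgebra ℂ G) := ∑ h : H, L h with hS
  have hSS : S * S = (m : ℂ) • S := by
    rw [hS, Finset.sum_mul_sum]
    have hinner : ∀ h : H, ∑ h' : H, L h * L h' = S := by
      intro h
      rw [hS]
      rw [show (∑ h' : H, L h * L h') = ∑ h' : H, L (h * h') from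
        Finset.sum_congr rfl (fun h' _ => hLmul h h')]
      exact Fintype.sum_equiv (Equiv.mulLeft h) _ _ (fun h' => rfl)
    calc (∑ h : H, ∑ h' : H, L h * L h') = ∑ _h : H, S := Finset.sum_congr rfl
          (fun h _ => hinner h)
      _ = (Fintype.card H) • S := by rw [Finset.sum_const, Finset.card_univ]
      _ = (m : ℂ) • S := by rw [← hmfin, Nat.cast_smul_eq_nsmul]
  set e : Module.End ℂ (MonoidAlgebra ℂ G) := (m : ℂ)⁻¹ • S with he
  have hmC : (m : ℂ) ≠ 0 := by exact_mod_cast hmpos.ne'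
  have hee : e * e = e := by
    rw [he, smul_mul_smul_comm, hSS, smul_smul]
    congr 1
    field_simp
  have hproj : LinearMap.IsProj (LinearMap.range e) e := by
    refine ⟨fun x => LinearMap.mem_range_self e x, ?_⟩
    rintro x ⟨y, rfl⟩
    rw [← Module.End.mul_apply, hee]
  haveI : Module.Finite ℂ (MonoidAlgebra ℂ G) := Module.Finite.of_basis (cbasis G)
  have htrace := hproj.trace
  -- compute the trace of e
  have hcoeffsum : (∑ h : H, (((h : (MonoidAlgebra ℤ G)ˣ) : MonoidAlgebra ℤ G).coeff 1 : ℂ)) = 1 := by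
    rw [Finset.sum_eq_single_of_mem (1 : H) (Finset.mem_univ _)]
    · have : ((1 : MonoidAlgebra ℤ G).coeff 1 : ℤ) = 1 := by
        rw [MonoidAlgebra.one_def, MonoidAlgebra.coeff_single, Finsupp.single_apply, if_pos rfl]
      norm_num [this]
    · intro h _ hne
      have hne' : (h : (MonoidAlgebra ℤ G)ˣ) ≠ 1 := by
        simpa [← OneMemClass.coe_eq_one] using hne
      rw [berman_higman (h : (MonoidAlgebra ℤ G)ˣ) hmpos.ne' (hpow h)
        (hH _ h.2) hne']
      norm_num
  have htrS : LinearMap.trace ℂ (MonoidAlgebra ℂ G) S = (n : ℂ) := by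
    rw [hS, map_sum]
    have : ∀ h : H, LinearMap.trace ℂ (MonoidAlgebra ℂ G) (L h) =
        (n : ℂ) * (((h : (MonoidAlgebra ℤ G)ˣ) : MonoidAlgebra ℤ G).coeff 1 : ℂ) := by
      intro h
      rw [hL, trace_lmul, hn]
      congr 1
      rw [hφ, mapCoeff_apply]
      simp
    rw [Finset.sum_congr rfl (fun h _ => this h), ← Finset.mul_sum, hcoeffsum, mul_one]
  have htre : LinearMap.trace ℂ (MonoidAlgebra ℂ G) e = (m : ℂ)⁻¹ * n := by
    rw [he, map_smul, htrS, smul_eq_mul]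
  rw [htrace] at htre
  have hfin : (m * Module.finrank ℂ (LinearMap.range e) : ℂ) = (n : ℂ) := by
    rw [htre]
    field_simp
  have hfinN : m * Module.finrank ℂ (LinearMap.range e) = n := by exact_mod_cast hfin
  rw [Nat.card_eq_fintype_card (α := G), ← hn, ← hfinN]
  exact Dvd.intro _ rfl
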